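/- arXiv:1703.00676 — 6 statements merged into one kernel-verified Lean document; each statement's English description precedes it below -/
import Mathlib

section
/- Let k be a binary kernel on a set X, i.e., a positive semidefinite kernel on X taking only the values 0 and 1, and let ∼ₖ be the relation on X induced by k, defined by x ∼ₖ y if and only if k(x,y) = 1. Then ∼ₖ is a partial equivalence relation: it is symmetric (x ∼ₖ y implies y ∼ₖ x) and transitive (x ∼ₖ y and y ∼ₖ z imply x ∼ₖ z). -/
/-- A positive semidefinite kernel on a set `X`: a symmetric real-valued function
all of whose finite Gram matrices are positive semidefinite. -/
def IsPSDKernel {X : Type*} (k : X → X → ℝ) : Prop :=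
  (∀ x y, k x y = k y x) ∧
  ∀ (n : ℕ) (x : Fin n → X) (c : Fin n → ℝ),
    0 ≤ ∑ i, ∑ j, c i * c j * k (x i) (x j)

lemma binary_kernel_diag {X : Type*} (k : X → X → ℝ)
    (hpsd : IsPSDKernel k) (hbin : ∀ x y, k x y = 0 ∨ k x y = 1)
    {x y : X} (hxy : k x y = 1) : k x x = 1 := by
  rcases hbin x x with h | h
  · exfalso
    have := hpsd.2 2 ![x, y] ![-(k y y + 1) / 2, 1]
    simp [Fin.sum_univ_two] at this
    have hsym := hpsd.1 y x
    rw [hxy] at hsym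
    rw [h, hxy, hsym] at this
    linarith
  · exact h

/-- For a binary kernel `k` (a positive semidefinite kernel taking only values
`0` and `1`), the induced relation `x ∼ₖ y ⇔ k x y = 1` is a partial equivalence
relation: it is symmetric and transitive. -/
theorem binary_kernel_induced_relation_per {X : Type*} (k : X → X → ℝ)
    (hpsd : IsPSDKernel k) (hbin : ∀ x y, k x y = 0 ∨ k x y = 1) :
    (∀ x y : X, k x y = 1 → k y x = 1) ∧
    (∀ x y z : X, k x y = 1 → k y z = 1 → k x z = 1) := by
  have hsym : ∀ x y : X, k x y = 1 → k y x = 1 := fun x y h => by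
    rw [hpsd.1 y x]; exact h
  refine ⟨hsym, fun x y z hxy hyz => ?_⟩
  have hxx : k x x = 1 := binary_kernel_diag k hpsd hbin hxy
  have hyy : k y y = 1 := binary_kernel_diag k hpsd hbin (hsym x y hxy)
  have hzz : k z z = 1 := binary_kernel_diag k hpsd hbin (hsym y z hyz)
  have hyx := hsym x y hxy
  have hzy := hsym y z hyz
  have hsxz := hpsd.1 z x
  rcases hbin x z with h | h
  · exfalso
    have := hpsd.2 3 ![x, y, z] ![1, -1, 1]
    simp [Fin.sum_univ_three] at this
    rw [h] at hsxz
    rw [hxx, hyy, hzz, hxy, hyx, hyz, hzy, h, hsxz] at this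
    linarith
  · exact h
end

section
/- Let k be a binary kernel on a set X, let X_ref = {x ∈ X | k(x,x) = 1}, and let Q = X_ref / ∼ₖ be the set of equivalence classes of the restriction of the induced relation ∼ₖ to X_ref (which is an equivalence relation on X_ref). Define φ : X → (Q → ℝ) by φ(x)_Q = 1 if x ∈ X_ref and Q = [x]ₖ, and φ(x)_Q = 0 otherwise; each φ(x) has at most one nonzero component. Then φ is a feature map of k, i.e., for all x, y ∈ X, Σ_{Q ∈ Q} φ(x)_Q · φ(y)_Q = k(x,y), where the sum has at most one nonzero term. -/
/-- The equivalence classes of the relation induced by a binary kernel `k` on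
`X_ref = {x | k x x = 1}`: the sets of the form `[x]ₖ = {y | k x y = 1}` for
`x ∈ X_ref`. -/
def KernelClasses {X : Type*} (k : X → X → ℝ) : Type _ :=
  {S : Set X // ∃ x, k x x = 1 ∧ S = {y | k x y = 1}}

open Classical in
/-- The map `φ : X → (Q → ℝ)` sending `x ∈ X_ref` to the indicator of its
equivalence class `[x]ₖ` (and `x ∉ X_ref` to the zero vector); each `φ x` has at
most one nonzero component. -/
noncomputable def classFeatureMap {X : Type*} (k : X → X → ℝ) :
    X → KernelClasses k → ℝ :=
  fun x S => if k x x = 1 ∧ S.val = {y | k x y = 1} then 1 else 0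

lemma diag_one {X : Type*} {k : X → X → ℝ} (hpsd : IsPSDKernel k)
    (hbin : ∀ x y, k x y = 0 ∨ k x y = 1) {x y : X} (h : k x y = 1) : k x x = 1 := by
  obtain ⟨hsym, hpos⟩ := hpsd
  rcases hbin x x with hxx | hxx
  · exfalso
    have := hpos 2 ![x, y] ![-1, 1]
    simp [Fin.sum_univ_two] at this
    have hyx : k y x = 1 := (hsym x y ▸ h : _)
    rcases hbin y y with hyy | hyy <;> nlinarith
  · exact hxx

lemma trans_one {X : Type*} {k : X → X → ℝ} (hpsd : IsPSDKernel k)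
    (hbin : ∀ x y, k x y = 0 ∨ k x y = 1) {x y z : X}
    (hxy : k x y = 1) (hyz : k y z = 1) : k x z = 1 := by
  obtain ⟨hsym, hpos⟩ := hpsd
  have hxx := diag_one ⟨hsym, hpos⟩ hbin hxy
  have hyy := diag_one ⟨hsym, hpos⟩ hbin (hsym x y ▸ hxy : k y x = 1)
  have hzz := diag_one ⟨hsym, hpos⟩ hbin (hsym y z ▸ hyz : k z y = 1)
  rcases hbin x z with hxz | hxz
  · exfalso
    have := hpos 3 ![x, y, z] ![1, -1, 1]
    simp [Fin.sum_univ_three] at this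
    have h1 : k y x = 1 := hsym x y ▸ hxy
    have h2 : k z y = 1 := hsym y z ▸ hyz
    have h3 : k z x = 0 := hsym x z ▸ hxz
    nlinarith
  · exact hxz

/-- For a binary kernel `k` on `X`, the map `φ` sending each `x ∈ X_ref` to the
indicator vector of its equivalence class `[x]ₖ` (indexed by the set `Q` of
equivalence classes of `∼ₖ` on `X_ref`) is a feature map of `k`: for all
`x, y ∈ X`, `∑_{Q ∈ Q} φ(x)_Q · φ(y)_Q = k x y` (a sum with at most one nonzero
term). -/
theorem binary_kernel_feature_map {X : Type*} (k : X → X → ℝ)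
    (hpsd : IsPSDKernel k) (hbin : ∀ x y, k x y = 0 ∨ k x y = 1) (x y : X) :
    ∑ᶠ S : KernelClasses k, classFeatureMap k x S * classFeatureMap k y S = k x y := by
  classical
  have hsym := hpsd.1
  rcases hbin x y with hxy | hxy
  · -- every term is zero
    have hz : ∀ S : KernelClasses k,
        classFeatureMap k x S * classFeatureMap k y S = 0 := by
      intro S
      unfold classFeatureMap
      by_cases hx : k x x = 1 ∧ S.val = {z | k x z = 1}
      · by_cases hy : k y y = 1 ∧ S.val = {z | k y z = 1}
        · exfalso
          have hmem : y ∈ S.val := by rw [hy.2]; exact hy.1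
          rw [hx.2] at hmem
          have : k x y = 1 := hmem
          rw [hxy] at this; norm_num at this
        · simp [hy]
      · simp [hx]
    rw [finsum_congr hz, finsum_zero, hxy]
  · -- k x y = 1
    have hxx : k x x = 1 := diag_one hpsd hbin hxy
    have hyx : k y x = 1 := hsym x y ▸ hxy
    have hyy : k y y = 1 := diag_one hpsd hbin hyx
    have hclass : {z | k x z = 1} = {z | k y z = 1} := by
      ext z
      constructor
      · intro hz; exact trans_one hpsd hbin hyx hz
      · intro hz; exact trans_one hpsd hbin hxy hz
    set S₀ : KernelClasses k := ⟨{z | k x z = 1}, x, hxx, rfl⟩ with hS₀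
    have hmain : ∑ᶠ S : KernelClasses k,
        classFeatureMap k x S * classFeatureMap k y S
        = classFeatureMap k x S₀ * classFeatureMap k y S₀ := by
      apply finsum_eq_single
      intro S hS
      unfold classFeatureMap
      by_cases hx : k x x = 1 ∧ S.val = {z | k x z = 1}
      · exfalso
        exact hS (Subtype.ext hx.2)
      · simp [hx]
    rw [hmain, hxy]
    unfold classFeatureMap
    rw [if_pos ⟨hxx, rfl⟩, if_pos ⟨hyy, hclass⟩]
    norm_num
end

section
/- Let Σ_V and Σ_E be label sets, k_V a positive semidefinite kernel on Σ_V and k_E a positive semidefinite kernel on Σ_E, and ℓ ∈ ℕ a fixed walk length. For a finite labeled graph G (a simple graph on a finite vertex set with a vertex labeling into Σ_V and an edge labeling into Σ_E), let W_ℓ(G) denote the finite set of walks of length ℓ in G, and for walks w = (v₀,e₁,v₁,…,e_ℓ,v_ℓ) in G and w' = (v₀',e₁',…,v_ℓ') in H define k_W(w,w') = Π_{i=0}^{ℓ} k_V(lab(vᵢ), lab(vᵢ')) · Π_{i=1}^{ℓ} k_E(lab(eᵢ), lab(eᵢ')). Then the ℓ-walk kernel K^=_ℓ(G,H) = Σ_{w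 ∈ W_ℓ(G)} Σ_{w' ∈ W_ℓ(H)} k_W(w,w') is positive semidefinite: for every finite family of labeled graphs G₁,…,Gₙ and all c₁,…,cₙ ∈ ℝ, Σᵢ Σⱼ cᵢ cⱼ K^=_ℓ(Gᵢ,Gⱼ) ≥ 0. -/
/-- A labeled graph: a simple graph on a finite vertex set together with a
vertex labeling into `SV` and an edge labeling into `SE` (given as a labeling
of unordered vertex pairs; only its values on edges are ever used). -/
structure LabeledGraph (SV SE : Type*) where
  V : Type
  [fintypeV : Fintype V]
  G : SimpleGraph V
  labV : V → SV
  labE : Sym2 V → SE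

attribute [instance] LabeledGraph.fintypeV

/-- `w : Fin (ℓ+1) → G.V` is (the vertex sequence of) a walk of length `ℓ` in
`G`: consecutive vertices are adjacent. -/
def LabeledGraph.IsWalk {SV SE : Type*} (G : LabeledGraph SV SE) {ℓ : ℕ}
    (w : Fin (ℓ + 1) → G.V) : Prop :=
  ∀ i : Fin ℓ, G.G.Adj (w i.castSucc) (w i.succ)

open Classical in
/-- The `ℓ`-walk kernel `K^=_ℓ(G,H) = Σ_{w ∈ W_ℓ(G)} Σ_{w' ∈ W_ℓ(H)} k_W(w,w')`,
where for walks `w = (v₀,e₁,…,v_ℓ)` and `w' = (v₀',e₁',…,v_ℓ')`,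
`k_W(w,w') = Π_{i=0}^{ℓ} k_V(lab(vᵢ),lab(vᵢ')) · Π_{i=1}^{ℓ} k_E(lab(eᵢ),lab(eᵢ'))`. -/
noncomputable def walkKernel {SV SE : Type*} (kV : SV → SV → ℝ)
    (kE : SE → SE → ℝ) (ℓ : ℕ) (G H : LabeledGraph SV SE) : ℝ :=
  ∑ w : Fin (ℓ + 1) → G.V, ∑ w' : Fin (ℓ + 1) → H.V,
    if G.IsWalk w ∧ H.IsWalk w' then
      (∏ i : Fin (ℓ + 1), kV (G.labV (w i)) (H.labV (w' i))) *
      (∏ i : Fin ℓ, kE (G.labE s(w i.castSucc, w i.succ))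
                       (H.labE s(w' i.castSucc, w' i.succ)))
    else 0


open Matrix in
lemma quad_eq {n : ℕ} (M : Matrix (Fin n) (Fin n) ℝ) (c : Fin n → ℝ) :
    c ⬝ᵥ M.mulVec c = ∑ i, ∑ j, c i * c j * M i j := by
  simp only [dotProduct, Matrix.mulVec, Finset.mul_sum]
  exact Finset.sum_congr rfl fun i _ => Finset.sum_congr rfl fun j _ => by ring

open Matrix in
lemma psd_mul {X : Type*} {k₁ k₂ : X → X → ℝ} (h₁ : IsPSDKernel k₁) (h₂ : IsPSDKernel k₂) :
    IsPSDKernel (fun a b => k₁ a b * k₂ a b) := by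
  refine ⟨fun a b => by simp only []; rw [h₁.1, h₂.1], fun n x c => ?_⟩
  classical
  set M : Matrix (Fin n) (Fin n) ℝ := Matrix.of fun i j => k₂ (x i) (x j) with hM
  have hMpsd : M.PosSemidef := by
    refine Matrix.PosSemidef.of_dotProduct_mulVec_nonneg ?_ ?_
    · ext i j; simp [Matrix.conjTranspose_apply, hM, h₂.1]
    · intro v
      have := h₂.2 n x v
      rw [show star v = v from rfl, quad_eq]
      simpa [hM] using this
  obtain ⟨B, hB⟩ : ∃ B : Matrix (Fin n) (Fin n) ℝ, M = Bᴴ * B := by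
    open scoped MatrixOrder in
    exact ⟨CFC.sqrt M, by
      rw [(CFC.sqrt_nonneg M).posSemidef.isHermitian.eq, CFC.sqrt_mul_sqrt_self M hMpsd.nonneg]⟩
  have hk₂ : ∀ i j, k₂ (x i) (x j) = ∑ r, B r i * B r j := by
    intro i j
    have h3 : M i j = (Bᴴ * B) i j := by rw [hB]
    simpa [Matrix.mul_apply, Matrix.conjTranspose_apply, hM] using h3
  simp only []
  calc (0:ℝ) ≤ ∑ r, ∑ i, ∑ j, (c i * B r i) * (c j * B r j) * k₁ (x i) (x j) :=
        Finset.sum_nonneg fun r _ => h₁.2 n x (fun i => c i * B r i)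
    _ = ∑ i, ∑ j, c i * c j * (k₁ (x i) (x j) * k₂ (x i) (x j)) := by
        rw [Finset.sum_comm]
        refine Finset.sum_congr rfl fun i _ => ?_
        rw [Finset.sum_comm]
        refine Finset.sum_congr rfl fun j _ => ?_
        rw [hk₂, Finset.mul_sum, Finset.mul_sum]
        refine Finset.sum_congr rfl fun r _ => by ring

lemma psd_comp {X Y : Type*} {k : X → X → ℝ} (h : IsPSDKernel k) (f : Y → X) :
    IsPSDKernel (fun a b => k (f a) (f b)) :=
  ⟨fun a b => h.1 _ _, fun n x c => h.2 n (f ∘ x) c⟩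

lemma psd_rankone {X : Type*} (f : X → ℝ) : IsPSDKernel (fun a b => f a * f b) := by
  refine ⟨fun a b => mul_comm _ _, fun n x c => ?_⟩
  have h : ∑ i, ∑ j, c i * c j * (f (x i) * f (x j)) = (∑ i, c i * f (x i))^2 := by
    rw [sq, Finset.sum_mul_sum]
    exact Finset.sum_congr rfl fun i _ => Finset.sum_congr rfl fun j _ => by ring
  simp only []; rw [h]; positivity

lemma psd_prod {X ι : Type*} (s : Finset ι) (k : ι → X → X → ℝ)
    (h : ∀ i ∈ s, IsPSDKernel (k i)) :
    IsPSDKernel (fun a b => ∏ i ∈ s, k i a b) := by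
  classical
  induction s using Finset.induction with
  | empty =>
      simpa using psd_rankone (fun _ : X => (1:ℝ))
  | insert a s' hi ih =>
      simp only [Finset.prod_insert hi]
      exact psd_mul (h a (Finset.mem_insert_self a s'))
        (ih fun i hi' => h i (Finset.mem_insert_of_mem hi'))

lemma psd_sum_fintype {X : Type*} [Fintype X] {k : X → X → ℝ} (h : IsPSDKernel k)
    (d : X → ℝ) : 0 ≤ ∑ x, ∑ y, d x * d y * k x y := by
  classical
  let e := (Fintype.equivFin X).symm
  have h2 := h.2 (Fintype.card X) (fun i => e i) (fun i => d (e i))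
  calc (0:ℝ) ≤ ∑ i, ∑ j, d (e i) * d (e j) * k (e i) (e j) := h2
    _ = ∑ x, ∑ y, d x * d y * k x y := by
        rw [← Equiv.sum_comp e (fun x => ∑ y, d x * d y * k x y)]
        refine Finset.sum_congr rfl fun i _ => ?_
        rw [← Equiv.sum_comp e (fun y => d (e i) * d y * k (e i) y)]

lemma sum_sigma_fintype {ι : Type*} [Fintype ι] {σ : ι → Type*} [∀ i, Fintype (σ i)]
    {M : Type*} [AddCommMonoid M] (g : (Σ i, σ i) → M) :
    ∑ a : Σ i, σ i, g a = ∑ i, ∑ s, g ⟨i, s⟩ := by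
  rw [← Finset.univ_sigma_univ, Finset.sum_sigma]

/-- If `k_V` and `k_E` are positive semidefinite kernels on the label sets, then
the `ℓ`-walk kernel is positive semidefinite: every finite Gram matrix on
labeled graphs it produces is positive semidefinite. -/
theorem walk_kernel_psd {SV SE : Type*} (kV : SV → SV → ℝ) (kE : SE → SE → ℝ)
    (hV : IsPSDKernel kV) (hE : IsPSDKernel kE) (ℓ : ℕ)
    (n : ℕ) (Gs : Fin n → LabeledGraph SV SE) (c : Fin n → ℝ) :
    0 ≤ ∑ i, ∑ j, c i * c j * walkKernel kV kE ℓ (Gs i) (Gs j) := by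
  classical
  let T := (i : Fin n) × (Fin (ℓ + 1) → (Gs i).V)
  let f : T → ℝ := fun a => if (Gs a.1).IsWalk a.2 then 1 else 0
  let K : T → T → ℝ := fun a b =>
    (f a * f b) *
    ((∏ t : Fin (ℓ + 1), kV ((Gs a.1).labV (a.2 t)) ((Gs b.1).labV (b.2 t))) *
     (∏ t : Fin ℓ, kE ((Gs a.1).labE s(a.2 t.castSucc, a.2 t.succ))
                      ((Gs b.1).labE s(b.2 t.castSucc, b.2 t.succ))))
  have hK : IsPSDKernel K :=
    psd_mul (psd_rankone f)
      (psd_mul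
        (psd_prod Finset.univ
          (fun (t : Fin (ℓ + 1)) (a b : T) => kV ((Gs a.1).labV (a.2 t)) ((Gs b.1).labV (b.2 t)))
          (fun t _ => psd_comp hV (fun a : T => (Gs a.1).labV (a.2 t))))
        (psd_prod Finset.univ
          (fun (t : Fin ℓ) (a b : T) => kE ((Gs a.1).labE s(a.2 t.castSucc, a.2 t.succ))
            ((Gs b.1).labE s(b.2 t.castSucc, b.2 t.succ)))
          (fun t _ => psd_comp hE
            (fun a : T => (Gs a.1).labE s(a.2 t.castSucc, a.2 t.succ)))))
  have h0 : (0:ℝ) ≤ ∑ a : T, ∑ b : T, c a.1 * c b.1 * K a b :=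
    psd_sum_fintype hK (fun a => c a.1)
  have expand : ∀ i j, c i * c j * walkKernel kV kE ℓ (Gs i) (Gs j)
      = ∑ w : Fin (ℓ+1) → (Gs i).V, ∑ w' : Fin (ℓ+1) → (Gs j).V,
          c i * c j * K ⟨i, w⟩ ⟨j, w'⟩ := by
    intro i j
    rw [walkKernel, Finset.mul_sum]
    refine Finset.sum_congr rfl fun w _ => ?_
    rw [Finset.mul_sum]
    refine Finset.sum_congr rfl fun w' _ => ?_
    simp only [K, f]
    by_cases h1 : (Gs i).IsWalk w <;> by_cases h2 : (Gs j).IsWalk w' <;>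
      simp [h1, h2]
  calc (0:ℝ) ≤ ∑ a : T, ∑ b : T, c a.1 * c b.1 * K a b := h0
    _ = ∑ i, ∑ j, c i * c j * walkKernel kV kE ℓ (Gs i) (Gs j) := by
        rw [sum_sigma_fintype]
        refine Finset.sum_congr rfl fun i _ => ?_
        have hsig : ∀ w : Fin (ℓ+1) → (Gs i).V, ∑ b : T, c i * c b.1 * K ⟨i, w⟩ b
            = ∑ j, ∑ w' : Fin (ℓ+1) → (Gs j).V, c i * c j * K ⟨i, w⟩ ⟨j, w'⟩ :=
          fun w => sum_sigma_fintype _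
        rw [Finset.sum_congr rfl fun w _ => hsig w, Finset.sum_comm]
        exact Finset.sum_congr rfl fun j _ => (expand i j).symm
end

section
/- Let U be a set, k_W, k_V : U × U → ℝ functions, φ^W : U → (Fin d_W → ℝ) a map with ⟨φ^W(v), φ^W(w)⟩ = k_W(v,w) for all v, w ∈ U, and φ̃^V : U → (Fin D → ℝ) a map. Let G, H ⊆ U be finite subsets, ε > 0, and M ≥ 0 with |k_W(v,w)| ≤ M for all v ∈ G, w ∈ H, and suppose |⟨φ̃^V(v), φ̃^V(w)⟩ − k_V(v,w)| < ε for all v ∈ G and w ∈ H. Define φ̃^WV(G) = Σ_{v ∈ G} φ^W(v) ⊗ φ̃^V(v) and similarly for H. Then |⟨φ̃^WV(G), φ̃^WV(H)⟩ − Σ_{v ∈ G} Σ_{w ∈ H} k_W(v,w) · k_V(v,w)| ≤ ε · M · |G| · |H|. -/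
/-- Approximation guarantee for weighted vertex kernels: if `φ^W` is an exact
feature map of the weight kernel `k_W`, `|k_W| ≤ M` on `G × H`, and `φ̃^V` is a
finite-dimensional approximate feature map of the vertex kernel `k_V` that is
uniformly `ε`-accurate on the vertices of `G` and `H`, then the dot product of
the approximate feature vectors `φ̃^WV(G) = Σ_{v ∈ G} φ^W(v) ⊗ φ̃^V(v)` and
`φ̃^WV(H)` differs from the weighted vertex kernel
`Σ_{v ∈ G} Σ_{w ∈ H} k_W(v,w) · k_V(v,w)` by at most `ε · M · |G| · |H|`. -/
theorem weighted_vertex_kernel_approx {U : Type*} {dW D : ℕ}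
    (kW kV : U → U → ℝ) (φW : U → Fin dW → ℝ) (φV : U → Fin D → ℝ)
    (hW : ∀ v w : U, ∑ i, φW v i * φW w i = kW v w)
    (G H : Finset U) (ε M : ℝ) (hε : 0 < ε) (hM : 0 ≤ M)
    (hMb : ∀ v ∈ G, ∀ w ∈ H, |kW v w| ≤ M)
    (happrox : ∀ v ∈ G, ∀ w ∈ H, |(∑ j, φV v j * φV w j) - kV v w| < ε) :
    |(∑ p : Fin dW × Fin D,
        (∑ v ∈ G, φW v p.1 * φV v p.2) * (∑ w ∈ H, φW w p.1 * φV w p.2)) -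
      ∑ v ∈ G, ∑ w ∈ H, kW v w * kV v w| ≤ ε * M * G.card * H.card := by
  have key : (∑ p : Fin dW × Fin D,
        (∑ v ∈ G, φW v p.1 * φV v p.2) * (∑ w ∈ H, φW w p.1 * φV w p.2))
      = ∑ v ∈ G, ∑ w ∈ H, kW v w * (∑ j, φV v j * φV w j) := by
    have : (∑ p : Fin dW × Fin D,
        (∑ v ∈ G, φW v p.1 * φV v p.2) * (∑ w ∈ H, φW w p.1 * φV w p.2))
        = ∑ v ∈ G, ∑ w ∈ H, ∑ p : Fin dW × Fin D,
            (φW v p.1 * φV v p.2) * (φW w p.1 * φV w p.2) := by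
      simp_rw [Finset.sum_mul_sum]
      rw [Finset.sum_comm]
      exact Finset.sum_congr rfl fun v _ => Finset.sum_comm
    rw [this]
    refine Finset.sum_congr rfl fun v _ => Finset.sum_congr rfl fun w _ => ?_
    rw [← hW v w, Fintype.sum_prod_type, Finset.sum_mul_sum]
    exact Finset.sum_congr rfl fun i _ => Finset.sum_congr rfl fun j _ => by ring
  rw [key, ← Finset.sum_sub_distrib]
  calc |∑ v ∈ G, ((∑ w ∈ H, kW v w * ∑ j, φV v j * φV w j) - ∑ w ∈ H, kW v w * kV v w)|
      ≤ ∑ v ∈ G, |(∑ w ∈ H, kW v w * ∑ j, φV v j * φV w j) - ∑ w ∈ H, kW v w * kV v w| :=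
        Finset.abs_sum_le_sum_abs _ _
    _ ≤ ∑ v ∈ G, (ε * M * H.card) := by
        refine Finset.sum_le_sum fun v hv => ?_
        rw [← Finset.sum_sub_distrib]
        calc |∑ w ∈ H, (kW v w * (∑ j, φV v j * φV w j) - kW v w * kV v w)|
            ≤ ∑ w ∈ H, |kW v w * (∑ j, φV v j * φV w j) - kW v w * kV v w| :=
              Finset.abs_sum_le_sum_abs _ _
          _ ≤ ∑ w ∈ H, ε * M := by
              refine Finset.sum_le_sum fun w hw => ?_
              rw [← mul_sub, abs_mul, mul_comm]
              exact mul_le_mul (le_of_lt (happrox v hv w hw)) (hMb v hv w hw)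
                (abs_nonneg _) (le_of_lt hε)
          _ = ε * M * H.card := by rw [Finset.sum_const, nsmul_eq_mul]; ring
    _ = ε * M * G.card * H.card := by rw [Finset.sum_const, nsmul_eq_mul]; ring
end

section
/- Let G and H be finite simple graphs, k_V : V(G) × V(H) → ℝ a vertex weight function and k_E : E(G) × E(H) → ℝ an edge weight function, and ℓ ∈ ℕ. Define r : ℕ → (V(G) × V(H)) → ℝ recursively by r₀(u,u') = k_V(u,u') and, for i ≥ 1, rᵢ(u,u') = Σ_{v ∈ N_G(u)} Σ_{v' ∈ N_H(u')} k_V(u,u') · k_E(uv, u'v') · r_{i-1}(v,v'). Then Σ_{(u,u') ∈ V(G) × V(H)} r_ℓ(u,u') = Σ_{w ∈ W_ℓ(G)} Σ_{w' ∈ W_ℓ(H)} k_W(w,w'), where for walks w = (v₀,e₁,…,v_ℓ) and w' = (v₀',e₁',…,v_ℓ'), k_W(w,w') = Π_{i=0}^{ℓ} k_V(vᵢ,vᵢ') · Π_{i=1}^{ℓ} k_E(eᵢ,eᵢ'). In other words, the recursive weighted walk count on the (weighted direct) product of G and H computes the ℓ-walk kernel K^=_ℓ(G,H). -/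
/-- The recursive weighted walk count on the (weighted direct) product of `G`
and `H`: `r₀(u,u') = k_V(u,u')` and
`rᵢ(u,u') = Σ_{v ∈ N_G(u)} Σ_{v' ∈ N_H(u')} k_V(u,u') · k_E(uv,u'v') · r_{i-1}(v,v')`. -/
noncomputable def rWalk {VG VH : Type*} [Fintype VG] [Fintype VH]
    (G : SimpleGraph VG) (H : SimpleGraph VH)
    [DecidableRel G.Adj] [DecidableRel H.Adj]
    (kV : VG → VH → ℝ) (kE : Sym2 VG → Sym2 VH → ℝ) : ℕ → VG → VH → ℝ
  | 0 => fun u u' => kV u u'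
  | (i + 1) => fun u u' =>
      ∑ v ∈ G.neighborFinset u, ∑ v' ∈ H.neighborFinset u',
        kV u u' * kE s(u, v) s(u', v') * rWalk G H kV kE i v v'

lemma sum_pi_fin_succ {β : Type*} [Fintype β] (n : ℕ) (F : (Fin (n+1) → β) → ℝ) :
    ∑ f : Fin (n+1) → β, F f = ∑ v : β, ∑ g : Fin n → β, F (Fin.cons v g) := by
  rw [← (Fin.consEquiv fun _ => β).sum_comp F, Fintype.sum_prod_type]
  rfl

lemma ite_sum_zero {α : Type*} (s : Finset α) (c : Prop) [Decidable c] (F : α → ℝ) :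
    (if c then ∑ x ∈ s, F x else 0) = ∑ x ∈ s, if c then F x else 0 := by
  split_ifs <;> simp

lemma cons_cons_one {α : Type*} {n : ℕ} (x y : α) (g : Fin n → α) :
    (Fin.cons x (Fin.cons y g) : Fin (n+2) → α) 1 = y := rfl

open Classical in
lemma rWalk_eq {VG VH : Type*} [Fintype VG] [Fintype VH]
    (G : SimpleGraph VG) (H : SimpleGraph VH)
    [DecidableRel G.Adj] [DecidableRel H.Adj]
    (kV : VG → VH → ℝ) (kE : Sym2 VG → Sym2 VH → ℝ) (ℓ : ℕ) (u : VG) (u' : VH) :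
    rWalk G H kV kE ℓ u u' =
      ∑ f : Fin ℓ → VG, ∑ f' : Fin ℓ → VH,
        if (∀ i : Fin ℓ, G.Adj ((Fin.cons u f : Fin (ℓ+1) → VG) i.castSucc)
              ((Fin.cons u f : Fin (ℓ+1) → VG) i.succ)) ∧
            (∀ i : Fin ℓ, H.Adj ((Fin.cons u' f' : Fin (ℓ+1) → VH) i.castSucc)
              ((Fin.cons u' f' : Fin (ℓ+1) → VH) i.succ)) then
          (∏ i : Fin (ℓ + 1), kV ((Fin.cons u f : Fin (ℓ+1) → VG) i)
            ((Fin.cons u' f' : Fin (ℓ+1) → VH) i)) *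
          (∏ i : Fin ℓ, kE s((Fin.cons u f : Fin (ℓ+1) → VG) i.castSucc,
              (Fin.cons u f : Fin (ℓ+1) → VG) i.succ)
            s((Fin.cons u' f' : Fin (ℓ+1) → VH) i.castSucc,
              (Fin.cons u' f' : Fin (ℓ+1) → VH) i.succ))
        else 0 := by
  induction ℓ generalizing u u' with
  | zero => simp [rWalk]
  | succ n ih =>
    simp only [rWalk, ih, SimpleGraph.neighborFinset_eq_filter, Finset.sum_filter,
      Finset.mul_sum, mul_ite, mul_zero, ite_sum_zero]
    conv_rhs => rw [sum_pi_fin_succ]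
    refine Finset.sum_congr rfl fun v _ => ?_
    conv_rhs => rw [Finset.sum_comm, sum_pi_fin_succ]
    refine Finset.sum_congr rfl fun v' _ => ?_
    conv_rhs => rw [Finset.sum_comm]
    refine Finset.sum_congr rfl fun g _ => Finset.sum_congr rfl fun g' _ => ?_
    simp only [Fin.forall_fin_succ, Fin.prod_univ_succ, Fin.cons_zero, Fin.cons_succ,
      ← Fin.succ_castSucc, Fin.castSucc_zero, Fin.succ_zero_eq_one, cons_cons_one]
    split_ifs <;> try tauto
    ring


open Classical in
/-- The recursive weighted walk count on the product of `G` and `H` computes the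
`ℓ`-walk kernel: `Σ_{(u,u')} r_ℓ(u,u') = Σ_{w ∈ W_ℓ(G)} Σ_{w' ∈ W_ℓ(H)} k_W(w,w')`,
where for walks `w = (v₀,e₁,…,v_ℓ)` and `w' = (v₀',e₁',…,v_ℓ')`,
`k_W(w,w') = Π_{i=0}^{ℓ} k_V(vᵢ,vᵢ') · Π_{i=1}^{ℓ} k_E(eᵢ,eᵢ')`. -/
theorem rWalk_eq_walk_kernel {VG VH : Type*} [Fintype VG] [Fintype VH]
    (G : SimpleGraph VG) (H : SimpleGraph VH)
    [DecidableRel G.Adj] [DecidableRel H.Adj]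
    (kV : VG → VH → ℝ) (kE : Sym2 VG → Sym2 VH → ℝ) (ℓ : ℕ) :
    ∑ u : VG, ∑ u' : VH, rWalk G H kV kE ℓ u u' =
      ∑ w : Fin (ℓ + 1) → VG, ∑ w' : Fin (ℓ + 1) → VH,
        if (∀ i : Fin ℓ, G.Adj (w i.castSucc) (w i.succ)) ∧
            (∀ i : Fin ℓ, H.Adj (w' i.castSucc) (w' i.succ)) then
          (∏ i : Fin (ℓ + 1), kV (w i) (w' i)) *
          (∏ i : Fin ℓ, kE s(w i.castSucc, w i.succ) s(w' i.castSucc, w' i.succ))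
        else 0 := by
  conv_rhs => rw [sum_pi_fin_succ]
  refine Finset.sum_congr rfl fun u _ => ?_
  conv_rhs => rw [Finset.sum_comm, sum_pi_fin_succ]
  refine Finset.sum_congr rfl fun u' _ => ?_
  conv_rhs => rw [Finset.sum_comm]
  exact rWalk_eq G H kV kE ℓ u u'
end

section
/- Let Σ_V be a label set with a positive semidefinite kernel k_V, and let k_E be a positive semidefinite kernel on ℕ ∪ {∞} (path lengths) satisfying k_E(d, d') = 0 whenever d = ∞ or d' = ∞. For finite labeled graphs G and H (simple graphs on finite vertex sets with vertex labels in Σ_V), let d_{uv} ∈ ℕ ∪ {∞} denote the shortest-path distance between vertices u and v. Then the shortest-path kernel K^SP(G,H) = Σ_{u,v ∈ V(G), u ≠ v} Σ_{w,z ∈ V(H), w ≠ z} k_V(lab(u),lab(w)) · k_E(d_{uv}, d_{wz}) · k_V(lab(v),lab(z)) is positive semidefinite: for every finite family of labeled graphs G₁,…,Gₙ and all c₁,…,cₙ ∈ ℝ, Σᵢ Σⱼ cᵢ cⱼ K^SP(Gᵢ,Gⱼ) ≥ 0. -/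
/-- A vertex-labeled graph: a simple graph on a finite vertex set together with
a vertex labeling into `SV`. -/
structure VLGraph (SV : Type*) where
  V : Type
  [fintypeV : Fintype V]
  G : SimpleGraph V
  labV : V → SV

attribute [instance] VLGraph.fintypeV

open Classical in
/-- The shortest-path kernel
`K^SP(G,H) = Σ_{u,v ∈ V(G), u≠v} Σ_{w,z ∈ V(H), w≠z}
  k_V(lab u, lab w) · k_E(d_{uv}, d_{wz}) · k_V(lab v, lab z)`,
where `d_{uv} ∈ ℕ∞` is the shortest-path distance (`∞` for vertices in
different connected components). -/
noncomputable def spKernel {SV : Type*} (kV : SV → SV → ℝ)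
    (kE : ℕ∞ → ℕ∞ → ℝ) (G H : VLGraph SV) : ℝ :=
  ∑ u : G.V, ∑ v : G.V, ∑ w : H.V, ∑ z : H.V,
    if u ≠ v ∧ w ≠ z then
      kV (G.labV u) (H.labV w) * kE (G.G.edist u v) (H.G.edist w z) *
        kV (G.labV v) (H.labV z)
    else 0

lemma psd_gram {X : Type*} {k : X → X → ℝ} (hk : IsPSDKernel k)
    {ι : Type*} [Fintype ι] (x : ι → X) (c : ι → ℝ) :
    0 ≤ ∑ i, ∑ j, c i * c j * k (x i) (x j) := by
  let e := (Fintype.equivFin ι).symm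
  calc (0:ℝ) ≤ ∑ i, ∑ j, (c ∘ e) i * (c ∘ e) j * k ((x ∘ e) i) ((x ∘ e) j) :=
        hk.2 (Fintype.card ι) (x ∘ e) (c ∘ e)
    _ = ∑ i, ∑ j, c i * c j * k (x i) (x j) := by
        rw [← Equiv.sum_comp e (fun i => ∑ j, c i * c j * k (x i) (x j))]
        exact Finset.sum_congr rfl fun i _ =>
          Equiv.sum_comp e (fun j => c (e i) * c j * k (x (e i)) (x j))

lemma gram_posSemidef {X : Type*} {k : X → X → ℝ} (hk : IsPSDKernel k)
    {m : ℕ} (x : Fin m → X) :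
    (Matrix.of fun i j => k (x i) (x j)).PosSemidef := by
  rw [Matrix.posSemidef_iff_dotProduct_mulVec]
  constructor
  · ext i j
    simp [Matrix.conjTranspose_apply, hk.1 (x j) (x i)]
  · intro cv
    have h := hk.2 m x cv
    have heq : dotProduct (star cv) (Matrix.mulVec (Matrix.of fun i j => k (x i) (x j)) cv)
        = ∑ i, ∑ j, cv i * cv j * k (x i) (x j) := by
      simp only [dotProduct, Matrix.mulVec, Pi.star_apply, star_trivial, Matrix.of_apply,
        Finset.mul_sum]
      exact Finset.sum_congr rfl fun i _ => Finset.sum_congr rfl fun j _ => by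
        ring
    rw [heq]; exact h

lemma IsPSDKernel.prodK {X Y : Type*} {kA : X → X → ℝ} {kB : Y → Y → ℝ}
    (hA : IsPSDKernel kA) (hB : IsPSDKernel kB) :
    IsPSDKernel (fun p q : X × Y => kA p.1 q.1 * kB p.2 q.2) := by
  constructor
  · intro p q
    show kA p.1 q.1 * kB p.2 q.2 = kA q.1 p.1 * kB q.2 p.2
    rw [hA.1, hB.1]
  · intro m x cv
    obtain ⟨B, hB'⟩ : ∃ B : Matrix (Fin m) (Fin m) ℝ,
        (Matrix.of fun i j => kA (x i).1 (x j).1) = B.conjTranspose * B := by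
      classical
      open scoped MatrixOrder Matrix.Norms.L2Operator in
      obtain ⟨B, hB⟩ := CStarAlgebra.nonneg_iff_eq_star_mul_self.mp
        (gram_posSemidef hA (fun i => (x i).1)).nonneg
      exact ⟨B, hB⟩
    have key : ∀ i j, kA (x i).1 (x j).1 = ∑ r, B r i * B r j := by
      intro i j
      have := congrFun (congrFun hB' i) j
      simpa [Matrix.mul_apply, Matrix.conjTranspose_apply] using this
    calc (0:ℝ) ≤ ∑ r, ∑ i, ∑ j,
          (cv i * B r i) * (cv j * B r j) * kB (x i).2 (x j).2 :=
          Finset.sum_nonneg fun r _ => psd_gram hB (fun i => (x i).2) (fun i => cv i * B r i)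
      _ = ∑ i, ∑ j, cv i * cv j * (kA (x i).1 (x j).1 * kB (x i).2 (x j).2) := by
          rw [Finset.sum_comm]
          refine Finset.sum_congr rfl fun i _ => ?_
          rw [Finset.sum_comm]
          refine Finset.sum_congr rfl fun j _ => ?_
          rw [key i j]
          simp only [Finset.sum_mul, Finset.mul_sum]
          exact Finset.sum_congr rfl fun r _ => by ring

/-- If `k_V` is a positive semidefinite kernel on the vertex labels and `k_E` is
a positive semidefinite kernel on path lengths in `ℕ∞` vanishing whenever one of
its arguments is `∞`, then the shortest-path kernel is positive semidefinite:
every finite Gram matrix on labeled graphs it produces is positive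
semidefinite. -/
theorem shortest_path_kernel_psd {SV : Type*} (kV : SV → SV → ℝ)
    (kE : ℕ∞ → ℕ∞ → ℝ) (hV : IsPSDKernel kV) (hE : IsPSDKernel kE)
    (hE0 : ∀ d d' : ℕ∞, d = ⊤ ∨ d' = ⊤ → kE d d' = 0)
    (n : ℕ) (Gs : Fin n → VLGraph SV) (c : Fin n → ℝ) :
    0 ≤ ∑ i, ∑ j, c i * c j * spKernel kV kE (Gs i) (Gs j) := by
  classical
  have hKpsd : IsPSDKernel
      (fun p q : SV × (ℕ∞ × SV) =>
        kV p.1 q.1 * (kE p.2.1 q.2.1 * kV p.2.2 q.2.2)) := hV.prodK (hE.prodK hV)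
  have key := psd_gram hKpsd
    (fun σ : Σ i : Fin n, (Gs i).V × (Gs i).V =>
      ((Gs σ.1).labV σ.2.1, ((Gs σ.1).G.edist σ.2.1 σ.2.2, (Gs σ.1).labV σ.2.2)))
    (fun σ => c σ.1 * (if σ.2.1 ≠ σ.2.2 then (1:ℝ) else 0))
  refine le_of_le_of_eq key ?_
  calc ∑ σ : Σ i : Fin n, (Gs i).V × (Gs i).V, ∑ τ : Σ i : Fin n, (Gs i).V × (Gs i).V,
        (c σ.1 * (if σ.2.1 ≠ σ.2.2 then (1:ℝ) else 0)) *
          (c τ.1 * (if τ.2.1 ≠ τ.2.2 then (1:ℝ) else 0)) *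
          (kV ((Gs σ.1).labV σ.2.1) ((Gs τ.1).labV τ.2.1) *
            (kE ((Gs σ.1).G.edist σ.2.1 σ.2.2) ((Gs τ.1).G.edist τ.2.1 τ.2.2) *
              kV ((Gs σ.1).labV σ.2.2) ((Gs τ.1).labV τ.2.2)))
      = ∑ i, ∑ p : (Gs i).V × (Gs i).V, ∑ j, ∑ q : (Gs j).V × (Gs j).V,
        (c i * (if p.1 ≠ p.2 then (1:ℝ) else 0)) *
          (c j * (if q.1 ≠ q.2 then (1:ℝ) else 0)) *
          (kV ((Gs i).labV p.1) ((Gs j).labV q.1) *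
            (kE ((Gs i).G.edist p.1 p.2) ((Gs j).G.edist q.1 q.2) *
              kV ((Gs i).labV p.2) ((Gs j).labV q.2))) := by
        rw [← Finset.univ_sigma_univ, Finset.sum_sigma]
        refine Finset.sum_congr rfl fun i _ => Finset.sum_congr rfl fun p _ => ?_
        rw [Finset.sum_sigma]
    _ = ∑ i, ∑ j, ∑ p : (Gs i).V × (Gs i).V, ∑ q : (Gs j).V × (Gs j).V,
        (c i * (if p.1 ≠ p.2 then (1:ℝ) else 0)) *
          (c j * (if q.1 ≠ q.2 then (1:ℝ) else 0)) *
          (kV ((Gs i).labV p.1) ((Gs j).labV q.1) *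
            (kE ((Gs i).G.edist p.1 p.2) ((Gs j).G.edist q.1 q.2) *
              kV ((Gs i).labV p.2) ((Gs j).labV q.2))) :=
        Finset.sum_congr rfl fun i _ => Finset.sum_comm
    _ = ∑ i, ∑ j, c i * c j * spKernel kV kE (Gs i) (Gs j) := by
        refine Finset.sum_congr rfl fun i _ => Finset.sum_congr rfl fun j _ => ?_
        rw [spKernel]
        simp only [Finset.mul_sum, Fintype.sum_prod_type]
        refine Finset.sum_congr rfl fun u _ => Finset.sum_congr rfl fun v _ =>
          Finset.sum_congr rfl fun w _ => Finset.sum_congr rfl fun z _ => ?_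
        by_cases h1 : u ≠ v
        · by_cases h2 : w ≠ z
          · rw [if_pos h1, if_pos h2, if_pos ⟨h1, h2⟩]; ring
          · rw [if_neg h2, if_neg (show ¬(u ≠ v ∧ w ≠ z) from fun h => h2 h.2)]; ring
        · rw [if_neg h1, if_neg (show ¬(u ≠ v ∧ w ≠ z) from fun h => h1 h.1)]; ring
end
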